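/- Let X and Y be real Hilbert spaces, K ⊆ X a nonempty closed convex cone, A : X → X strongly monotone (constant m_A > 0) and Lipschitz, R : C(I;X) → C(I;Y) and S : C(I;X) → C(I;X) operators satisfying, for every compact J ⊆ I, bounds ∥Ru₁(t) - Ru₂(t)∥_Y ≤ l_J^R ∥u₁(t)-u₂(t)∥_X + L_J^R ∫₀ᵗ ∥u₁(s)-u₂(s)∥_X ds and similarly for S with constants l_J^S, L_J^S; let j : Y × K → ℝ satisfy: j(η,·) convex, positively homogeneous, Lipschitz for each η, and j(η₁,v₂)-j(η₁,v₁)+j(η₂,v₁)-j(η₂,v₂) ≤ α_j ∥η₁-η₂∥_Y ∥v₁-v₂∥_X; let f ∈ C(I;X). If (α_j + 1)(l_J^R + l_J^S) < m_A for every compact J ⊆ I, then there exists a unique u ∈ C(I;K) such that for all t ∈ I: u(t) ∈ K and j(Ru(t), v) - j(Ru(t), u(t)) ≥ ⟨f(t) - Au(t) - Su(t), v - u(t)⟩_X for all v ∈ K. -/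

import Mathlib

open RealInnerProductSpace

open Filter



lemma aux_prox {X : Type*} [NormedAddCommGroup X] [InnerProductSpace ℝ X] [CompleteSpace X]
    {K : Set X} (hKne : K.Nonempty) (hKcl : IsClosed K) (hKcv : Convex ℝ K)
    (ψ : X → ℝ) (hψc : ConvexOn ℝ K ψ) (L : ℝ)
    (hψl : ∀ v ∈ K, ∀ w ∈ K, |ψ v - ψ w| ≤ L * ‖v - w‖) (y : X) :
    ∃ w ∈ K, ∀ z ∈ K, 0 ≤ ⟪w - y, z - w⟫ + ψ z - ψ w := by
  classical
  -- WLOG L ≥ 0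
  have hψl' : ∀ v ∈ K, ∀ w ∈ K, |ψ v - ψ w| ≤ max L 0 * ‖v - w‖ := by
    intro v hv w hw
    refine (hψl v hv w hw).trans (mul_le_mul_of_nonneg_right (le_max_left _ _) (norm_nonneg _))
  set L' : ℝ := max L 0 with hL'
  have hL'0 : 0 ≤ L' := le_max_right _ _
  set F : X → ℝ := fun z => ‖z - y‖ ^ 2 / 2 + ψ z with hF
  clear_value F
  obtain ⟨z₀, hz₀⟩ := hKne
  -- bounded below
  have hbdd : ∀ z ∈ K, ψ z₀ - L' * ‖y - z₀‖ - L' ^ 2 / 2 ≤ F z := by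
    intro z hz
    have h1 : |ψ z - ψ z₀| ≤ L' * ‖z - z₀‖ := hψl' z hz z₀ hz₀
    have h2 : ‖z - z₀‖ ≤ ‖z - y‖ + ‖y - z₀‖ := norm_sub_le_norm_sub_add_norm_sub z y z₀
    have h3 : ψ z₀ - L' * ‖z - z₀‖ ≤ ψ z := by
      have := abs_le.1 h1
      linarith [this.1]
    have h4 : 0 ≤ (‖z - y‖ - L') ^ 2 := sq_nonneg _
    have h5 : 0 ≤ ‖z - y‖ := norm_nonneg _
    simp only [hF]
    nlinarith [mul_le_mul_of_nonneg_left h2 hL'0]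
  have hbddB : BddBelow (F '' K) := by
    refine ⟨ψ z₀ - L' * ‖y - z₀‖ - L' ^ 2 / 2, ?_⟩
    rintro _ ⟨z, hz, rfl⟩
    exact hbdd z hz
  set d : ℝ := sInf (F '' K) with hd
  clear_value d
  have hdle : ∀ z ∈ K, d ≤ F z := by
    intro z hz; rw [hd]; exact csInf_le hbddB ⟨z, hz, rfl⟩
  -- minimizing sequence
  have hseq : ∀ n : ℕ, ∃ z ∈ K, F z < d + 1 / (n + 1) := by
    intro n
    have hlt : d < d + 1 / (n + 1) := by
      have : (0:ℝ) < 1 / (n + 1) := by positivity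
      linarith
    rw [hd] at hlt
    obtain ⟨_, ⟨z, hz, rfl⟩, hzF⟩ := exists_lt_of_csInf_lt (Set.Nonempty.image F ⟨z₀, hz₀⟩) hlt
    rw [← hd] at hzF
    exact ⟨z, hz, hzF⟩
  choose Z hZK hZF using hseq
  -- midpoint estimate
  have hmid : ∀ z ∈ K, ∀ w ∈ K, ‖z - w‖ ^ 2 ≤ 4 * F z + 4 * F w - 8 * d := by
    intro z hz w hw
    have hmK : (2:ℝ)⁻¹ • z + (2:ℝ)⁻¹ • w ∈ K := hKcv hz hw (by norm_num) (by norm_num) (by norm_num)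
    have hψm : ψ ((2:ℝ)⁻¹ • z + (2:ℝ)⁻¹ • w) ≤ 2⁻¹ * ψ z + 2⁻¹ * ψ w :=
      hψc.2 hz hw (by norm_num) (by norm_num) (by norm_num)
    have hdF := hdle _ hmK
    have hpar : ‖(z - y) + (w - y)‖ ^ 2 + ‖(z - y) - (w - y)‖ ^ 2
        = 2 * (‖z - y‖ ^ 2 + ‖w - y‖ ^ 2) := by
      have := parallelogram_law_with_norm ℝ (z - y) (w - y)
      linarith
    have hmy : (2:ℝ)⁻¹ • z + (2:ℝ)⁻¹ • w - y = (2:ℝ)⁻¹ • ((z - y) + (w - y)) := by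
      module
    have hzw : z - w = (z - y) - (w - y) := by abel
    have hnm : ‖(2:ℝ)⁻¹ • z + (2:ℝ)⁻¹ • w - y‖ ^ 2 = ‖(z - y) + (w - y)‖ ^ 2 / 4 := by
      rw [hmy, norm_smul]
      simp [mul_pow]
      ring
    simp only [hF] at hdF hZF ⊢
    rw [hnm] at hdF
    rw [hzw]
    nlinarith
  -- Cauchy
  have hcau : CauchySeq Z := by
    refine cauchySeq_of_le_tendsto_0 (fun N => Real.sqrt (8 / (N + 1))) ?_ ?_
    · intro n m N hn hm
      have h1 : F (Z n) < d + 1 / (n + 1) := hZF n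
      have h2 : F (Z m) < d + 1 / (m + 1) := hZF m
      have h3 : ‖Z n - Z m‖ ^ 2 ≤ 4 * F (Z n) + 4 * F (Z m) - 8 * d := hmid _ (hZK n) _ (hZK m)
      have hn' : ((N:ℝ) + 1) ≤ (n:ℝ) + 1 := by exact_mod_cast Nat.succ_le_succ hn
      have hm' : ((N:ℝ) + 1) ≤ (m:ℝ) + 1 := by exact_mod_cast Nat.succ_le_succ hm
      have h4 : (1:ℝ) / (n + 1) ≤ 1 / (N + 1) := one_div_le_one_div_of_le (by positivity) hn'
      have h5 : (1:ℝ) / (m + 1) ≤ 1 / (N + 1) := one_div_le_one_div_of_le (by positivity) hm'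
      have h6 : ‖Z n - Z m‖ ^ 2 ≤ 8 / (N + 1) := by
        have : (8:ℝ) / (N+1) = 4 * (1/(N+1)) + 4 * (1/(N+1)) := by ring
        rw [this]; linarith
      rw [dist_eq_norm]
      calc ‖Z n - Z m‖ = Real.sqrt (‖Z n - Z m‖ ^ 2) := (Real.sqrt_sq (norm_nonneg _)).symm
        _ ≤ Real.sqrt (8 / (N + 1)) := Real.sqrt_le_sqrt h6
    · have h0 : Filter.Tendsto (fun N : ℕ => (8:ℝ) / (N + 1)) atTop (nhds 0) := by
        have := tendsto_one_div_add_atTop_nhds_zero_nat (𝕜 := ℝ)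
        have h8 := this.const_mul (8:ℝ)
        simp only [mul_one_div] at h8
        simpa using h8
      have := h0.sqrt
      simpa using this
  obtain ⟨w, hwt⟩ := cauchySeq_tendsto_of_complete hcau
  have hwK : w ∈ K := hKcl.mem_of_tendsto hwt (Filter.Eventually.of_forall hZK)
  -- F w ≤ d
  have hψt : Filter.Tendsto (fun n => ψ (Z n)) atTop (nhds (ψ w)) := by
    rw [tendsto_iff_dist_tendsto_zero]
    apply squeeze_zero (fun n => dist_nonneg) (g := fun n => L' * ‖Z n - w‖)
    · intro n
      rw [Real.dist_eq]
      exact hψl' _ (hZK n) _ hwK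
    · have hn0 : Filter.Tendsto (fun n => ‖Z n - w‖) atTop (nhds 0) := by
        have := (tendsto_iff_dist_tendsto_zero).1 hwt
        simpa [dist_eq_norm] using this
      simpa using hn0.const_mul L'
  have hFt : Filter.Tendsto (fun n => F (Z n)) atTop (nhds (F w)) := by
    simp only [hF]
    exact (((continuous_norm.comp (continuous_id.sub continuous_const)).pow 2).div_const 2).continuousAt.tendsto.comp hwt |>.add hψt
  have hFwd : F w ≤ d := by
    have hg : Filter.Tendsto (fun n : ℕ => d + 1 / ((n:ℝ) + 1)) atTop (nhds d) := by
      have := tendsto_one_div_add_atTop_nhds_zero_nat (𝕜 := ℝ)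
      simpa using tendsto_const_nhds.add this
    exact le_of_tendsto_of_tendsto' hFt hg (fun n => le_of_lt (hZF n))
  have hmin : ∀ z ∈ K, F w ≤ F z := fun z hz => hFwd.trans (hdle z hz)
  -- variational characterization
  refine ⟨w, hwK, ?_⟩
  intro z hz
  by_contra hlt
  push_neg at hlt
  set B : ℝ := ⟪w - y, z - w⟫ + ψ z - ψ w with hB
  have hBneg : B < 0 := hlt
  set c : ℝ := ‖z - w‖ ^ 2 / 2 with hc
  have hc0 : 0 ≤ c := by positivity
  have key : ∀ t : ℝ, 0 < t → t ≤ 1 → 0 ≤ t * B + t ^ 2 * c := by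
    intro t ht0 ht1
    have hzt : (1 - t) • w + t • z ∈ K := hKcv hwK hz (by linarith) (le_of_lt ht0) (by ring)
    have hFm := hmin _ hzt
    have hconv : ψ ((1 - t) • w + t • z) ≤ (1 - t) * ψ w + t * ψ z :=
      hψc.2 hwK hz (by linarith) (le_of_lt ht0) (by ring)
    have heq : (1 - t) • w + t • z - y = (w - y) + t • (z - w) := by module
    have hns : ‖(w - y) + t • (z - w)‖ ^ 2
        = ‖w - y‖ ^ 2 + 2 * (t * ⟪w - y, z - w⟫) + t ^ 2 * ‖z - w‖ ^ 2 := by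
      rw [norm_add_sq_real, real_inner_smul_right, norm_smul, Real.norm_eq_abs, abs_of_pos ht0]
      ring
    simp only [hF] at hFm
    rw [heq, hns] at hFm
    simp only [hB, hc]
    nlinarith
  have htpos : 0 < min 1 (-B / (2 * c + 1)) :=
    lt_min one_pos (div_pos (by linarith) (by positivity))
  have ht := key (min 1 (-B / (2 * c + 1))) htpos (min_le_left _ _)
  set t := min 1 (-B / (2 * c + 1)) with htdef
  have ht1 : t ≤ 1 := min_le_left _ _
  have ht2 : t ≤ -B / (2 * c + 1) := min_le_right _ _
  have ht0 : 0 < t := htpos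
  have htc : t * c ≤ -B / 2 := by
    have h1 : t * c ≤ (-B / (2 * c + 1)) * c := mul_le_mul_of_nonneg_right ht2 hc0
    have h2 : (-B / (2 * c + 1)) * c ≤ -B / 2 := by
      rw [div_mul_eq_mul_div, div_le_div_iff₀ (by positivity) (by norm_num)]
      nlinarith
    linarith
  nlinarith

lemma aux_evi {X : Type*} [NormedAddCommGroup X] [InnerProductSpace ℝ X] [CompleteSpace X]
    {K : Set X} (hKne : K.Nonempty) (hKcl : IsClosed K) (hKcv : Convex ℝ K)
    (A : X → X) (mA : ℝ) (hmA : 0 < mA)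
    (hAmono : ∀ u v : X, mA * ‖u - v‖ ^ 2 ≤ ⟪A u - A v, u - v⟫)
    (LA : ℝ) (hLA : 0 < LA) (hAlip : ∀ u v : X, ‖A u - A v‖ ≤ LA * ‖u - v‖)
    (ψ : X → ℝ) (hψc : ConvexOn ℝ K ψ) (L : ℝ)
    (hψl : ∀ v ∈ K, ∀ w ∈ K, |ψ v - ψ w| ≤ L * ‖v - w‖) (g : X) :
    ∃ u ∈ K, ∀ v ∈ K, ⟪g, v - u⟫ ≤ ⟪A u, v - u⟫ + ψ v - ψ u := by
  classical
  set ρ : ℝ := mA / LA ^ 2 with hρdef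
  have hρ : 0 < ρ := by positivity
  have hρLA : ρ * LA ^ 2 = mA := by
    rw [hρdef]; field_simp
  -- scaled functional
  have hψρc : ConvexOn ℝ K (fun z => ρ * ψ z) := by
    have := hψc.smul (le_of_lt hρ)
    simpa [smul_eq_mul] using this
  have hψρl : ∀ v ∈ K, ∀ w ∈ K, |ρ * ψ v - ρ * ψ w| ≤ ρ * L * ‖v - w‖ := by
    intro v hv w hw
    have : ρ * ψ v - ρ * ψ w = ρ * (ψ v - ψ w) := by ring
    rw [this, abs_mul, abs_of_pos hρ, mul_assoc]
    exact mul_le_mul_of_nonneg_left (hψl v hv w hw) (le_of_lt hρ)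
  have hT : ∀ v : X, ∃ w ∈ K, ∀ z ∈ K,
      0 ≤ ⟪w - (v - ρ • (A v - g)), z - w⟫ + ρ * ψ z - ρ * ψ w :=
    fun v => aux_prox hKne hKcl hKcv _ hψρc (ρ * L) hψρl (v - ρ • (A v - g))
  choose T hTK hTvi using hT
  set y : X → X := fun v => v - ρ • (A v - g) with hy
  -- step A : ‖T v₁ - T v₂‖ ≤ ‖y v₁ - y v₂‖
  have hstepA : ∀ v₁ v₂ : X, ‖T v₁ - T v₂‖ ≤ ‖y v₁ - y v₂‖ := by
    intro v₁ v₂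
    have e1 := hTvi v₁ (T v₂) (hTK v₂)
    have e2 := hTvi v₂ (T v₁) (hTK v₁)
    have hid : ⟪T v₁ - y v₁, T v₂ - T v₁⟫ + ⟪T v₂ - y v₂, T v₁ - T v₂⟫
        = ⟪y v₁ - y v₂, T v₁ - T v₂⟫ - ‖T v₁ - T v₂‖ ^ 2 := by
      rw [← real_inner_self_eq_norm_sq]
      simp only [inner_sub_left, inner_sub_right]
      rw [real_inner_comm (T v₂) (T v₁)]
      ring
    have hsum : 0 ≤ ⟪y v₁ - y v₂, T v₁ - T v₂⟫ - ‖T v₁ - T v₂‖ ^ 2 := by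
      rw [← hid]; linarith
    have hcs := real_inner_le_norm (y v₁ - y v₂) (T v₁ - T v₂)
    have h1 : ‖T v₁ - T v₂‖ ^ 2 ≤ ‖y v₁ - y v₂‖ * ‖T v₁ - T v₂‖ := by linarith
    rcases eq_or_lt_of_le (norm_nonneg (T v₁ - T v₂)) with h0 | h0
    · rw [← h0]; exact norm_nonneg _
    · nlinarith [norm_nonneg (y v₁ - y v₂)]
  -- step B : ‖y v₁ - y v₂‖² ≤ (1 - ρ * mA) * ‖v₁ - v₂‖²
  set c : ℝ := 1 - ρ * mA with hcdef
  have hc1 : c < 1 := by nlinarith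
  have hstepB : ∀ v₁ v₂ : X, ‖y v₁ - y v₂‖ ^ 2 ≤ c * ‖v₁ - v₂‖ ^ 2 := by
    intro v₁ v₂
    have hyd : y v₁ - y v₂ = (v₁ - v₂) - ρ • (A v₁ - A v₂) := by
      simp only [hy]; module
    have hmono := hAmono v₁ v₂
    have hlip := hAlip v₁ v₂
    have hlip2 : ‖A v₁ - A v₂‖ ^ 2 ≤ LA ^ 2 * ‖v₁ - v₂‖ ^ 2 := by
      nlinarith [norm_nonneg (A v₁ - A v₂), norm_nonneg (v₁ - v₂)]
    have hexp : ‖(v₁ - v₂) - ρ • (A v₁ - A v₂)‖ ^ 2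
        = ‖v₁ - v₂‖ ^ 2 - 2 * (ρ * ⟪v₁ - v₂, A v₁ - A v₂⟫) + ρ ^ 2 * ‖A v₁ - A v₂‖ ^ 2 := by
      rw [norm_sub_sq_real, real_inner_smul_right, norm_smul, Real.norm_eq_abs, abs_of_pos hρ]
      ring
    rw [hyd, hexp]
    have hcomm : ⟪v₁ - v₂, A v₁ - A v₂⟫ = ⟪A v₁ - A v₂, v₁ - v₂⟫ := real_inner_comm _ _
    rw [hcomm]
    have h1 : ρ ^ 2 * ‖A v₁ - A v₂‖ ^ 2 ≤ ρ ^ 2 * (LA ^ 2 * ‖v₁ - v₂‖ ^ 2) :=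
      mul_le_mul_of_nonneg_left hlip2 (by positivity)
    have h2 : ρ ^ 2 * (LA ^ 2 * ‖v₁ - v₂‖ ^ 2) = ρ * mA * ‖v₁ - v₂‖ ^ 2 := by
      rw [← hρLA]; ring
    nlinarith
  -- contraction
  set κ : ℝ := Real.sqrt (max c 0) with hκdef
  have hκ0 : 0 ≤ κ := Real.sqrt_nonneg _
  have hκ1 : κ < 1 := by
    have : max c 0 < 1 := max_lt hc1 one_pos
    calc κ = Real.sqrt (max c 0) := rfl
      _ < Real.sqrt 1 := by
          apply Real.sqrt_lt_sqrt (le_max_right _ _) this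
      _ = 1 := Real.sqrt_one
  have hdist : ∀ v₁ v₂ : X, dist (T v₁) (T v₂) ≤ κ * dist v₁ v₂ := by
    intro v₁ v₂
    rw [dist_eq_norm, dist_eq_norm]
    have h1 : ‖T v₁ - T v₂‖ ^ 2 ≤ max c 0 * ‖v₁ - v₂‖ ^ 2 := by
      have hA := hstepA v₁ v₂
      have hB := hstepB v₁ v₂
      have : c * ‖v₁ - v₂‖ ^ 2 ≤ max c 0 * ‖v₁ - v₂‖ ^ 2 :=
        mul_le_mul_of_nonneg_right (le_max_left _ _) (by positivity)
      nlinarith [norm_nonneg (T v₁ - T v₂), norm_nonneg (y v₁ - y v₂)]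
    calc ‖T v₁ - T v₂‖ = Real.sqrt (‖T v₁ - T v₂‖ ^ 2) := (Real.sqrt_sq (norm_nonneg _)).symm
      _ ≤ Real.sqrt (max c 0 * ‖v₁ - v₂‖ ^ 2) := Real.sqrt_le_sqrt h1
      _ = κ * ‖v₁ - v₂‖ := by
          rw [Real.sqrt_mul (le_max_right _ _), Real.sqrt_sq (norm_nonneg _)]
  have hcontr : ContractingWith ⟨κ, hκ0⟩ T := by
    constructor
    · exact_mod_cast hκ1
    · exact LipschitzWith.of_dist_le_mul hdist
  haveI : Nonempty X := ⟨0⟩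
  set u : X := ContractingWith.fixedPoint T hcontr with hu
  have hfix : T u = u := hcontr.fixedPoint_isFixedPt
  have huK : u ∈ K := hfix ▸ hTK u
  refine ⟨u, huK, ?_⟩
  intro v hv
  have hvi := hTvi u v hv
  rw [hfix] at hvi
  have hsimp : u - y u = ρ • (A u - g) := by simp only [hy]; module
  rw [show u - (u - ρ • (A u - g)) = ρ • (A u - g) by module] at hvi
  rw [real_inner_smul_left, inner_sub_left] at hvi
  have h2 : 0 ≤ ρ * ((⟪A u, v - u⟫ - ⟪g, v - u⟫) + ψ v - ψ u) := by linarith [hvi]; 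
  have h3 := (mul_nonneg_iff_of_pos_left hρ).mp h2
  linarith


lemma aux_gron (φ : ℝ → ℝ) (hφ : Continuous φ) (hnn : ∀ t, 0 ≤ φ t)
    (b C : ℝ) (hb : 0 ≤ b) (hC : 0 ≤ C)
    (h : ∀ t ∈ Set.Icc (0:ℝ) b, φ t ≤ C * ∫ s in (0:ℝ)..t, φ s) :
    ∀ t ∈ Set.Icc (0:ℝ) b, φ t = 0 := by
  obtain ⟨x, hx, hmax⟩ := isCompact_Icc.exists_isMaxOn (Set.nonempty_Icc.mpr hb)
    hφ.continuousOn
  set M : ℝ := φ x with hMdef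
  have hM : ∀ t ∈ Set.Icc (0:ℝ) b, φ t ≤ M := fun t ht => hmax ht
  have hM0 : 0 ≤ M := le_trans (hnn 0) (hM 0 ⟨le_refl 0, hb⟩)
  clear_value M
  have key : ∀ n : ℕ, ∀ t ∈ Set.Icc (0:ℝ) b, φ t ≤ M * (C * t) ^ n / n.factorial := by
    intro n
    induction n with
    | zero => simpa using hM
    | succ n ih =>
      intro t ht
      have hint : ∫ s in (0:ℝ)..t, φ s ≤ ∫ s in (0:ℝ)..t, M * (C * s) ^ n / n.factorial := by
        apply intervalIntegral.integral_mono_on ht.1 (hφ.intervalIntegrable 0 t)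
        · apply Continuous.intervalIntegrable
          continuity
        · intro s hs; exact ih s ⟨hs.1, le_trans hs.2 ht.2⟩
      have hfun : (fun s => M * (C * s) ^ n / (n.factorial : ℝ))
          = fun s => (M * C ^ n / n.factorial) * s ^ n := by
        funext s; rw [mul_pow]; ring
      have hval : ∫ s in (0:ℝ)..t, M * (C * s) ^ n / (n.factorial : ℝ)
          = (M * C ^ n / n.factorial) * (t ^ (n + 1) / (n + 1)) := by
        rw [hfun, intervalIntegral.integral_const_mul, integral_pow]
        norm_num
      have h1 := h t ht
      have h2 : C * ∫ s in (0:ℝ)..t, φ s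
          ≤ C * ((M * C ^ n / n.factorial) * (t ^ (n + 1) / (n + 1))) := by
        rw [← hval]
        exact mul_le_mul_of_nonneg_left hint hC
      have hfac : ((n + 1).factorial : ℝ) = (n + 1) * n.factorial := by
        rw [Nat.factorial_succ]; push_cast; ring
      have h3 : C * ((M * C ^ n / n.factorial) * (t ^ (n + 1) / (n + 1)))
          = M * (C * t) ^ (n + 1) / ((n + 1).factorial) := by
        rw [hfac, mul_pow]
        have hf : (0:ℝ) < n.factorial := by exact_mod_cast n.factorial_pos
        field_simp
        ring
      linarith
  intro t ht
  have hlim : Tendsto (fun n : ℕ => M * (C * t) ^ n / n.factorial) atTop (nhds 0) := by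
    have := FloorSemiring.tendsto_pow_div_factorial_atTop (K := ℝ) (C * t)
    have h2 := this.const_mul M
    simpa [mul_div_assoc] using h2
  have hle : φ t ≤ 0 := ge_of_tendsto' hlim (fun n => key n t ht)
  exact le_antisymm hle (hnn t)

set_option maxHeartbeats 2000000 in
/-- Theorem 3.1 of the paper (variational-inequality form of the time-dependent
inclusion): under assumptions (K), (A), (R), (S), (j), (f) and the smallness
condition `(α_j + 1)(l_J^R + l_J^S) < m_A` on every compact `J ⊆ I`, there is a
unique `u ∈ C(I;K)` with
`j(Ru(t),v) - j(Ru(t),u(t)) ≥ ⟪f(t) - Au(t) - Su(t), v - u(t)⟫` for all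
`v ∈ K`, `t ∈ I`.  Here `I = [0,T]` or `I = [0,∞)`, and elements of `C(I;·)`
are represented by continuous functions on `ℝ`, unique up to their values on `I`. -/
theorem time_dependent_inclusion_existence_uniqueness
    {X Y : Type*} [NormedAddCommGroup X] [InnerProductSpace ℝ X] [CompleteSpace X]
    [NormedAddCommGroup Y] [InnerProductSpace ℝ Y] [CompleteSpace Y]
    (I : Set ℝ) (hI : (∃ T : ℝ, 0 < T ∧ I = Set.Icc 0 T) ∨ I = Set.Ici 0)
    (K : Set X) (hKne : K.Nonempty) (hKcl : IsClosed K) (hKcv : Convex ℝ K)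
    (hKcone : ∀ c : ℝ, 0 < c → ∀ x ∈ K, c • x ∈ K) (hK0 : (0 : X) ∈ K)
    (A : X → X) (mA : ℝ) (hmA : 0 < mA)
    (hAmono : ∀ u v : X, mA * ‖u - v‖ ^ 2 ≤ ⟪A u - A v, u - v⟫)
    (hAlip : ∃ LA : ℝ, 0 < LA ∧ ∀ u v : X, ‖A u - A v‖ ≤ LA * ‖u - v‖)
    (R : (ℝ → X) → (ℝ → Y)) (S : (ℝ → X) → (ℝ → X))
    (hRmap : ∀ u : ℝ → X, Continuous u → Continuous (R u))
    (hSmap : ∀ u : ℝ → X, Continuous u → Continuous (S u))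
    (lR LR lS LS : Set ℝ → ℝ)
    (hR : ∀ J : Set ℝ, IsCompact J → J ⊆ I → 0 < lR J ∧ 0 < LR J ∧
      ∀ u₁ u₂ : ℝ → X, Continuous u₁ → Continuous u₂ → ∀ t ∈ J,
        ‖R u₁ t - R u₂ t‖ ≤
          lR J * ‖u₁ t - u₂ t‖ + LR J * ∫ s in (0:ℝ)..t, ‖u₁ s - u₂ s‖)
    (hS : ∀ J : Set ℝ, IsCompact J → J ⊆ I → 0 < lS J ∧ 0 < LS J ∧
      ∀ u₁ u₂ : ℝ → X, Continuous u₁ → Continuous u₂ → ∀ t ∈ J,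
        ‖S u₁ t - S u₂ t‖ ≤
          lS J * ‖u₁ t - u₂ t‖ + LS J * ∫ s in (0:ℝ)..t, ‖u₁ s - u₂ s‖)
    (j : Y → X → ℝ)
    (hjconv : ∀ η : Y, ConvexOn ℝ K (j η))
    (hjpos : ∀ η : Y, ∀ l : ℝ, 0 < l → ∀ v ∈ K, j η (l • v) = l * j η v)
    (hjlip : ∀ η : Y, ∃ Lj : ℝ, ∀ v ∈ K, ∀ w ∈ K, |j η v - j η w| ≤ Lj * ‖v - w‖)
    (αj : ℝ) (hαj : 0 ≤ αj)
    (hjb : ∀ η₁ η₂ : Y, ∀ v₁ ∈ K, ∀ v₂ ∈ K,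
      j η₁ v₂ - j η₁ v₁ + j η₂ v₁ - j η₂ v₂ ≤ αj * ‖η₁ - η₂‖ * ‖v₁ - v₂‖)
    (f : ℝ → X) (hf : Continuous f)
    (hsmall : ∀ J : Set ℝ, IsCompact J → J ⊆ I → (αj + 1) * (lR J + lS J) < mA) :
    ∃ u : ℝ → X,
      (Continuous u ∧ ∀ t ∈ I, u t ∈ K ∧
        ∀ v ∈ K, j (R u t) v - j (R u t) (u t) ≥ ⟪f t - A (u t) - S u t, v - u t⟫) ∧
      ∀ u' : ℝ → X,
        (Continuous u' ∧ ∀ t ∈ I, u' t ∈ K ∧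
          ∀ v ∈ K, j (R u' t) v - j (R u' t) (u' t) ≥
            ⟪f t - A (u' t) - S u' t, v - u' t⟫) →
        ∀ t ∈ I, u' t = u t := by
  classical
  obtain ⟨LA, hLA, hAlip'⟩ := hAlip
  choose Lj hLj using hjlip
  -- the elliptic solution map
  have hσex : ∀ η : Y, ∀ g : X, ∃ u ∈ K, ∀ v ∈ K,
      ⟪g, v - u⟫ ≤ ⟪A u, v - u⟫ + j η v - j η u := fun η g =>
    aux_evi hKne hKcl hKcv A mA hmA hAmono LA hLA hAlip' (j η) (hjconv η) (Lj η) (hLj η) g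
  choose σ hσK hσVI using hσex
  -- basic inner-product identity for converting between the two formulations
  have hform : ∀ (a g w v : X), ⟪g - A w - a, v - w⟫ = ⟪g - a, v - w⟫ - ⟪A w, v - w⟫ := by
    intro a g w v
    rw [show g - A w - a = (g - a) - A w by abel, inner_sub_left]
  -- Lipschitz-type estimate between solutions of two elliptic VIs
  have hest : ∀ (η₁ η₂ : Y) (g₁ g₂ : X) (u₁ u₂ : X), u₁ ∈ K → u₂ ∈ K →
      (∀ v ∈ K, ⟪g₁, v - u₁⟫ ≤ ⟪A u₁, v - u₁⟫ + j η₁ v - j η₁ u₁) →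
      (∀ v ∈ K, ⟪g₂, v - u₂⟫ ≤ ⟪A u₂, v - u₂⟫ + j η₂ v - j η₂ u₂) →
      mA * ‖u₁ - u₂‖ ≤ αj * ‖η₁ - η₂‖ + ‖g₁ - g₂‖ := by
    intro η₁ η₂ g₁ g₂ u₁ u₂ h1K h2K h1 h2
    have e1 := h1 u₂ h2K
    have e2 := h2 u₁ h1K
    have hb := hjb η₁ η₂ u₁ h1K u₂ h2K
    have hmono := hAmono u₁ u₂
    have hA' : ⟪A u₁, u₂ - u₁⟫ + ⟪A u₂, u₁ - u₂⟫ = -⟪A u₁ - A u₂, u₁ - u₂⟫ := by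
      simp only [inner_sub_left, inner_sub_right]; ring
    have hg' : ⟪g₁, u₂ - u₁⟫ + ⟪g₂, u₁ - u₂⟫ = -⟪g₁ - g₂, u₁ - u₂⟫ := by
      simp only [inner_sub_left, inner_sub_right]; ring
    have hcs : |⟪g₁ - g₂, u₁ - u₂⟫| ≤ ‖g₁ - g₂‖ * ‖u₁ - u₂‖ := abs_real_inner_le_norm _ _
    have hcs' := abs_le.1 hcs
    -- mA ‖u₁ - u₂‖² ≤ (αj ‖η₁ - η₂‖ + ‖g₁ - g₂‖) ‖u₁ - u₂‖
    have hkey : mA * ‖u₁ - u₂‖ ^ 2 ≤ (αj * ‖η₁ - η₂‖ + ‖g₁ - g₂‖) * ‖u₁ - u₂‖ := by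
      nlinarith [hmono, e1, e2, hb, hcs'.1, hcs'.2]
    rcases eq_or_lt_of_le (norm_nonneg (u₁ - u₂)) with h0 | h0
    · rw [← h0]
      have : 0 ≤ αj * ‖η₁ - η₂‖ := mul_nonneg hαj (norm_nonneg _)
      have := norm_nonneg (g₁ - g₂)
      nlinarith
    · nlinarith
  -- uniqueness for the elliptic problem
  have hsoluniq : ∀ (η : Y) (g : X) (u : X), u ∈ K →
      (∀ v ∈ K, ⟪g, v - u⟫ ≤ ⟪A u, v - u⟫ + j η v - j η u) → u = σ η g := by
    intro η g u huK hu
    have := hest η η g g u (σ η g) huK (hσK η g) hu (hσVI η g)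
    have h0 : mA * ‖u - σ η g‖ ≤ 0 := by simpa using this
    have : ‖u - σ η g‖ ≤ 0 := by
      nlinarith [norm_nonneg (u - σ η g)]
    rw [← sub_eq_zero]
    exact norm_le_zero_iff.mp this
  -- Lipschitz continuity of σ
  have hσlip : ∀ (η₁ η₂ : Y) (g₁ g₂ : X),
      mA * ‖σ η₁ g₁ - σ η₂ g₂‖ ≤ αj * ‖η₁ - η₂‖ + ‖g₁ - g₂‖ := fun η₁ η₂ g₁ g₂ =>
    hest η₁ η₂ g₁ g₂ _ _ (hσK η₁ g₁) (hσK η₂ g₂) (hσVI η₁ g₁) (hσVI η₂ g₂)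
  have hσcont : ∀ (η : ℝ → Y) (g : ℝ → X), Continuous η → Continuous g →
      Continuous (fun t => σ (η t) (g t)) := by
    intro η g hη hg
    have hL : LipschitzWith (Real.toNNReal (2 * max αj 1 / mA)) (fun p : Y × X => σ p.1 p.2) := by
      apply LipschitzWith.of_dist_le_mul
      intro p q
      rw [Prod.dist_eq, dist_eq_norm, dist_eq_norm, dist_eq_norm]
      have h1 := hσlip p.1 q.1 p.2 q.2
      have h2 : αj * ‖p.1 - q.1‖ ≤ max αj 1 * max ‖p.1 - q.1‖ ‖p.2 - q.2‖ := by
        apply mul_le_mul (le_max_left _ _) (le_max_left _ _) (norm_nonneg _)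
        exact le_trans hαj (le_max_left _ _)
      have h3 : ‖p.2 - q.2‖ ≤ max αj 1 * max ‖p.1 - q.1‖ ‖p.2 - q.2‖ := by
        nth_rewrite 1 [show ‖p.2 - q.2‖ = 1 * ‖p.2 - q.2‖ by ring]
        apply mul_le_mul (le_max_right _ _) (le_max_right _ _) (norm_nonneg _)
        exact le_trans zero_le_one (le_max_right _ _)
      rw [Real.coe_toNNReal _ (by positivity)]
      rw [div_mul_eq_mul_div, le_div_iff₀ hmA]
      nlinarith
    exact hL.continuous.comp (hη.prodMk hg)
  -- transfer of R and S along functions that agree on [0, b]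
  have htrans : ∀ b : ℝ, 0 ≤ b → Set.Icc (0:ℝ) b ⊆ I → ∀ u₁ u₂ : ℝ → X,
      Continuous u₁ → Continuous u₂ → Set.EqOn u₁ u₂ (Set.Icc 0 b) →
      ∀ t ∈ Set.Icc (0:ℝ) b, R u₁ t = R u₂ t ∧ S u₁ t = S u₂ t := by
    intro b hb hbI u₁ u₂ hc1 hc2 heq t ht
    obtain ⟨hlR, hLR, hRb⟩ := hR _ isCompact_Icc hbI
    obtain ⟨hlS, hLS, hSb⟩ := hS _ isCompact_Icc hbI
    have hzero : (∫ s in (0:ℝ)..t, ‖u₁ s - u₂ s‖) = 0 := by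
      rw [intervalIntegral.integral_congr (g := fun _ => (0:ℝ))]
      · simp
      · intro s hs
        rw [Set.uIcc_of_le ht.1] at hs
        have : u₁ s = u₂ s := heq ⟨hs.1, le_trans hs.2 ht.2⟩
        simp [this]
    have hpt : ‖u₁ t - u₂ t‖ = 0 := by
      rw [heq ht]; simp
    constructor
    · have := hRb u₁ u₂ hc1 hc2 t ht
      rw [hzero, hpt] at this
      simp only [mul_zero, add_zero] at this
      rw [← sub_eq_zero]
      exact norm_le_zero_iff.mp this
    · have := hSb u₁ u₂ hc1 hc2 t ht
      rw [hzero, hpt] at this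
      simp only [mul_zero, add_zero] at this
      rw [← sub_eq_zero]
      exact norm_le_zero_iff.mp this
  -- uniqueness on [0, b]
  have huniq : ∀ b : ℝ, 0 ≤ b → Set.Icc (0:ℝ) b ⊆ I → ∀ u₁ u₂ : ℝ → X,
      Continuous u₁ → Continuous u₂ →
      (∀ t ∈ Set.Icc (0:ℝ) b, u₁ t ∈ K ∧ ∀ v ∈ K,
        ⟪f t - S u₁ t, v - u₁ t⟫ ≤ ⟪A (u₁ t), v - u₁ t⟫ + j (R u₁ t) v - j (R u₁ t) (u₁ t)) →
      (∀ t ∈ Set.Icc (0:ℝ) b, u₂ t ∈ K ∧ ∀ v ∈ K,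
        ⟪f t - S u₂ t, v - u₂ t⟫ ≤ ⟪A (u₂ t), v - u₂ t⟫ + j (R u₂ t) v - j (R u₂ t) (u₂ t)) →
      Set.EqOn u₁ u₂ (Set.Icc 0 b) := by
    intro b hb hbI u₁ u₂ hc1 hc2 hsol1 hsol2
    obtain ⟨hlR, hLR, hRb⟩ := hR _ isCompact_Icc hbI
    obtain ⟨hlS, hLS, hSb⟩ := hS _ isCompact_Icc hbI
    have hsm := hsmall _ isCompact_Icc hbI
    set δ : ℝ := mA - (αj * lR (Set.Icc 0 b) + lS (Set.Icc 0 b)) with hδdef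
    have hδ : 0 < δ := by
      have : αj * lR (Set.Icc 0 b) + lS (Set.Icc 0 b) ≤ (αj + 1) * (lR (Set.Icc 0 b) + lS (Set.Icc 0 b)) := by
        nlinarith [hlR.le, hlS.le]
      rw [hδdef]; linarith
    set Cg : ℝ := (αj * LR (Set.Icc 0 b) + LS (Set.Icc 0 b)) / δ with hCgdef
    have hCg0 : 0 ≤ Cg := by
      rw [hCgdef]
      apply div_nonneg _ hδ.le
      nlinarith [hLR.le, hLS.le]
    have hφb : ∀ t ∈ Set.Icc (0:ℝ) b, ‖u₁ t - u₂ t‖ ≤ Cg * ∫ s in (0:ℝ)..t, ‖u₁ s - u₂ s‖ := by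
      intro t ht
      obtain ⟨h1K, h1v⟩ := hsol1 t ht
      obtain ⟨h2K, h2v⟩ := hsol2 t ht
      have he := hest (R u₁ t) (R u₂ t) (f t - S u₁ t) (f t - S u₂ t) (u₁ t) (u₂ t) h1K h2K h1v h2v
      have hgn : ‖(f t - S u₁ t) - (f t - S u₂ t)‖ = ‖S u₁ t - S u₂ t‖ := by
        rw [show (f t - S u₁ t) - (f t - S u₂ t) = -(S u₁ t - S u₂ t) by abel, norm_neg]
      rw [hgn] at he
      have hRt := hRb u₁ u₂ hc1 hc2 t ht
      have hSt := hSb u₁ u₂ hc1 hc2 t ht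
      have hRt' : αj * ‖R u₁ t - R u₂ t‖ ≤ αj * (lR (Set.Icc 0 b) * ‖u₁ t - u₂ t‖ +
          LR (Set.Icc 0 b) * ∫ s in (0:ℝ)..t, ‖u₁ s - u₂ s‖) :=
        mul_le_mul_of_nonneg_left hRt hαj
      have hint0 : 0 ≤ ∫ s in (0:ℝ)..t, ‖u₁ s - u₂ s‖ :=
        intervalIntegral.integral_nonneg ht.1 (fun s _ => norm_nonneg _)
      rw [hCgdef, div_mul_eq_mul_div, le_div_iff₀ hδ]
      rw [hδdef]
      nlinarith [he, hRt', hSt]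
    have := aux_gron (fun t => ‖u₁ t - u₂ t‖) ((hc1.sub hc2).norm) (fun t => norm_nonneg _)
      b Cg hb hCg0 hφb
    intro t ht
    have h0 := this t ht
    rw [← sub_eq_zero]
    exact norm_eq_zero.mp h0
  -- existence on [0, b]
  have hex : ∀ b : ℝ, 0 ≤ b → Set.Icc (0:ℝ) b ⊆ I → ∃ u : ℝ → X,
      Continuous u ∧ (∀ t, u t ∈ K) ∧ (∀ t, t ≤ 0 → u t = u 0) ∧
      ∀ t ∈ Set.Icc (0:ℝ) b, u t ∈ K ∧ ∀ v ∈ K,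
        ⟪f t - S u t, v - u t⟫ ≤ ⟪A (u t), v - u t⟫ + j (R u t) v - j (R u t) (u t) := by
    intro b hb hbI
    obtain ⟨hlR, hLR, hRb⟩ := hR _ isCompact_Icc hbI
    obtain ⟨hlS, hLS, hSb⟩ := hS _ isCompact_Icc hbI
    have hsm := hsmall _ isCompact_Icc hbI
    set lRb : ℝ := lR (Set.Icc 0 b)
    set LRb : ℝ := LR (Set.Icc 0 b)
    set lSb : ℝ := lS (Set.Icc 0 b)
    set LSb : ℝ := LS (Set.Icc 0 b)
    set k' : ℝ := (αj * lRb + lSb) / mA with hk'def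
    have hk'0 : 0 ≤ k' := div_nonneg (by nlinarith [hlR.le, hlS.le]) hmA.le
    have hk'1 : k' < 1 := by
      rw [hk'def, div_lt_one hmA]; nlinarith [hlR.le, hlS.le]
    set Cc : ℝ := (αj * LRb + LSb) / mA with hCcdef
    have hCc0 : 0 ≤ Cc := div_nonneg (by nlinarith [hLR.le, hLS.le]) hmA.le
    set lam : ℝ := (Cc + 1) / (1 - k') with hlamdef
    have hlam : 0 < lam := div_pos (by linarith) (by linarith)
    set κ : ℝ := k' + Cc / lam with hκdef
    have hκ0 : 0 ≤ κ := add_nonneg hk'0 (div_nonneg hCc0 hlam.le)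
    have hκ1 : κ < 1 := by
      have hne1 : (1:ℝ) - k' ≠ 0 := by linarith
      have hne2 : Cc + 1 ≠ 0 := by linarith
      have hCl : Cc / lam = Cc * (1 - k') / (Cc + 1) := by
        rw [hlamdef]; field_simp
      have hlt : Cc * (1 - k') / (Cc + 1) < 1 - k' := by
        rw [div_lt_iff₀ (by linarith)]; nlinarith
      rw [hκdef, hCl]; linarith
    -- the function space
    have hbne : Set.Nonempty (Set.Icc (0:ℝ) b) := Set.nonempty_Icc.mpr hb
    haveI : Nonempty (Set.Icc (0:ℝ) b) := hbne.to_subtype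
    haveI : Nonempty C(Set.Icc (0:ℝ) b, X) := ⟨ContinuousMap.const _ 0⟩
    set ext : C(Set.Icc (0:ℝ) b, X) → ℝ → X := fun w => Set.IccExtend hb w with hextdef
    have hextc : ∀ w, Continuous (ext w) := fun w => w.continuous.Icc_extend'
    have hextb : ∀ w₁ w₂, ∀ s : ℝ, ‖ext w₁ s - ext w₂ s‖ ≤ dist w₁ w₂ := by
      intro w₁ w₂ s
      rw [← dist_eq_norm]
      exact ContinuousMap.dist_apply_le_dist _
    set uop : C(Set.Icc (0:ℝ) b, X) → ℝ → X :=
      fun w t => Real.exp (lam * t) • ext w t with huopdef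
    have huopc : ∀ w, Continuous (uop w) :=
      fun w => (Real.continuous_exp.comp (continuous_const.mul continuous_id)).smul (hextc w)
    set Phi0 : C(Set.Icc (0:ℝ) b, X) → ℝ → X :=
      fun w t => Real.exp (-(lam * t)) • σ (R (uop w) t) (f t - S (uop w) t) with hPhi0def
    have hPhi0c : ∀ w, Continuous (Phi0 w) := by
      intro w
      apply Continuous.smul
      · exact Real.continuous_exp.comp (continuous_const.mul continuous_id).neg
      · exact hσcont _ _ (hRmap _ (huopc w)) (hf.sub (hSmap _ (huopc w)))
    set Phi : C(Set.Icc (0:ℝ) b, X) → C(Set.Icc (0:ℝ) b, X) :=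
      fun w => ⟨fun t => Phi0 w t, (hPhi0c w).comp continuous_subtype_val⟩ with hPhidef
    -- contraction estimate
    have hcontr : ∀ w₁ w₂, dist (Phi w₁) (Phi w₂) ≤ κ * dist w₁ w₂ := by
      intro w₁ w₂
      set D : ℝ := dist w₁ w₂ with hDdef
      have hD0 : 0 ≤ D := dist_nonneg
      rw [ContinuousMap.dist_le (mul_nonneg hκ0 hD0)]
      rintro ⟨t, ht⟩
      set u₁ : ℝ → X := uop w₁ with hu₁def
      set u₂ : ℝ → X := uop w₂ with hu₂def
      set Et : ℝ := Real.exp (lam * t) with hEtdef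
      have hEt0 : 0 < Et := Real.exp_pos _
      have hEt1 : 1 ≤ Et := Real.one_le_exp (mul_nonneg hlam.le ht.1)
      have hEi0 : 0 < Real.exp (-(lam * t)) := Real.exp_pos _
      have hEiEt : Real.exp (-(lam * t)) = Et⁻¹ := by
        rw [hEtdef, Real.exp_neg]
      -- pointwise bound
      have hpt : ∀ s : ℝ, ‖u₁ s - u₂ s‖ ≤ Real.exp (lam * s) * D := by
        intro s
        have : u₁ s - u₂ s = Real.exp (lam * s) • (ext w₁ s - ext w₂ s) := by
          rw [hu₁def, hu₂def, huopdef, smul_sub]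
        rw [this, norm_smul, Real.norm_eq_abs, abs_of_pos (Real.exp_pos _)]
        exact mul_le_mul_of_nonneg_left (hextb w₁ w₂ s) (Real.exp_pos _).le
      -- integral bound
      set Iv : ℝ := ∫ s in (0:ℝ)..t, ‖u₁ s - u₂ s‖ with hIvdef
      have hIv : lam * Iv ≤ D * (Et - 1) := by
        have h1 : Iv ≤ ∫ s in (0:ℝ)..t, Real.exp (lam * s) * D := by
          rw [hIvdef]
          apply intervalIntegral.integral_mono_on ht.1
            (((huopc w₁).sub (huopc w₂)).norm.intervalIntegrable 0 t)
            (((Real.continuous_exp.comp (continuous_const.mul continuous_id)).mul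
              continuous_const).intervalIntegrable 0 t)
          intro s _
          exact hpt s
        have hder : ∀ s : ℝ, HasDerivAt (fun x => Real.exp (lam * x) / lam)
            (Real.exp (lam * s)) s := by
          intro s
          have h2 := ((hasDerivAt_id s).const_mul lam).exp.div_const lam
          simp only [id_eq, mul_one] at h2
          rw [mul_div_assoc, div_self (ne_of_gt hlam), mul_one] at h2
          exact h2
        have h4 : ∫ s in (0:ℝ)..t, Real.exp (lam * s)
            = Real.exp (lam * t) / lam - Real.exp (lam * 0) / lam :=
          intervalIntegral.integral_eq_sub_of_hasDerivAt (fun s _ => hder s)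
            ((Real.continuous_exp.comp (continuous_const.mul continuous_id)).intervalIntegrable 0 t)
        have h5 : ∫ s in (0:ℝ)..t, Real.exp (lam * s) * D = ((Et - 1) / lam) * D := by
          rw [intervalIntegral.integral_mul_const, h4]
          rw [hEtdef]
          congr 1
          rw [mul_zero, Real.exp_zero]
          ring
        have h6 : lam * Iv ≤ lam * (((Et - 1) / lam) * D) := by
          apply mul_le_mul_of_nonneg_left _ hlam.le
          rw [← h5]; exact h1
        have h7 : lam * (((Et - 1) / lam) * D) = D * (Et - 1) := by
          field_simp
        linarith [h7 ▸ h6]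
      -- the σ estimate
      have hσd := hσlip (R u₁ t) (R u₂ t) (f t - S u₁ t) (f t - S u₂ t)
      have hgn : ‖(f t - S u₁ t) - (f t - S u₂ t)‖ = ‖S u₁ t - S u₂ t‖ := by
        rw [show (f t - S u₁ t) - (f t - S u₂ t) = -(S u₁ t - S u₂ t) by abel, norm_neg]
      rw [hgn] at hσd
      have hRt := hRb u₁ u₂ (huopc w₁) (huopc w₂) t ht
      have hSt := hSb u₁ u₂ (huopc w₁) (huopc w₂) t ht
      rw [← hIvdef] at hRt hSt
      have hptt : lRb * ‖u₁ t - u₂ t‖ ≤ lRb * (Et * D) := by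
        apply mul_le_mul_of_nonneg_left _ hlR.le
        rw [hEtdef]; exact hpt t
      have hptt' : lSb * ‖u₁ t - u₂ t‖ ≤ lSb * (Et * D) := by
        apply mul_le_mul_of_nonneg_left _ hlS.le
        rw [hEtdef]; exact hpt t
      have hR1 : ‖R u₁ t - R u₂ t‖ ≤ lRb * (Et * D) + LRb * Iv := by linarith
      have hS1 : ‖S u₁ t - S u₂ t‖ ≤ lSb * (Et * D) + LSb * Iv := by linarith
      have hR2 : αj * ‖R u₁ t - R u₂ t‖ ≤ αj * (lRb * (Et * D) + LRb * Iv) :=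
        mul_le_mul_of_nonneg_left hR1 hαj
      set s12 : X := σ (R u₁ t) (f t - S u₁ t) - σ (R u₂ t) (f t - S u₂ t) with hs12def
      have hchain : mA * ‖s12‖ ≤ αj * (lRb * (Et * D) + LRb * Iv) + (lSb * (Et * D) + LSb * Iv) := by
        rw [hs12def]; linarith
      have hchain2 : lam * (mA * ‖s12‖)
          ≤ lam * (αj * (lRb * (Et * D) + LRb * Iv) + (lSb * (Et * D) + LSb * Iv)) :=
        mul_le_mul_of_nonneg_left hchain hlam.le
      have hIv2 : (αj * LRb) * (lam * Iv) ≤ (αj * LRb) * (D * (Et - 1)) :=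
        mul_le_mul_of_nonneg_left hIv (mul_nonneg hαj hLR.le)
      have hIv3 : LSb * (lam * Iv) ≤ LSb * (D * (Et - 1)) :=
        mul_le_mul_of_nonneg_left hIv hLS.le
      have hprod : 0 ≤ (αj * LRb + LSb) * D :=
        mul_nonneg (by nlinarith [hLR.le, hLS.le]) hD0
      have hEq : (αj * lRb + lSb) * lam + (αj * LRb + LSb) = mA * lam * κ := by
        rw [hκdef, hk'def, hCcdef]
        have hne1 : (1:ℝ) - k' ≠ 0 := by linarith
        field_simp
      have hfin : mA * lam * ‖s12‖ ≤ mA * lam * κ * (Et * D) := by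
        rw [← hEq]
        nlinarith [hchain2, hIv2, hIv3, hprod, hD0, hEt1]
      have hfin2 : ‖s12‖ ≤ κ * (Et * D) := by
        have hml : 0 < mA * lam := mul_pos hmA hlam
        have := (mul_le_mul_iff_right₀ hml).mp (by linarith : mA * lam * ‖s12‖ ≤ mA * lam * (κ * (Et * D)))
        exact this
      -- conclude
      show dist (Phi0 w₁ t) (Phi0 w₂ t) ≤ κ * D
      rw [dist_eq_norm]
      have hdiff : Phi0 w₁ t - Phi0 w₂ t = Real.exp (-(lam * t)) • s12 := by
        rw [hPhi0def, hs12def, smul_sub]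
      rw [hdiff, norm_smul, Real.norm_eq_abs, abs_of_pos hEi0, hEiEt]
      rw [inv_mul_le_iff₀ hEt0]
      calc ‖s12‖ ≤ κ * (Et * D) := hfin2
        _ = Et * (κ * D) := by ring
    -- Banach fixed point
    have hcw : ContractingWith (Real.toNNReal κ) Phi := by
      constructor
      · rw [← Real.toNNReal_one]
        exact (Real.toNNReal_lt_toNNReal_iff one_pos).mpr hκ1
      · apply LipschitzWith.of_dist_le_mul
        intro w₁ w₂
        rw [Real.coe_toNNReal _ hκ0]
        exact hcontr w₁ w₂
    set v : C(Set.Icc (0:ℝ) b, X) := ContractingWith.fixedPoint Phi hcw with hvdef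
    have hfix : Phi v = v := hcw.fixedPoint_isFixedPt
    set u0 : ℝ → X := uop v with hu0def
    have hu0c : Continuous u0 := huopc v
    have hvK : ∀ x : Set.Icc (0:ℝ) b, v x ∈ K := by
      intro x
      have h1 : (Phi v) x = v x := DFunLike.congr_fun hfix x
      have h2 : (Phi v) x = Phi0 v x := rfl
      rw [← h1, h2, hPhi0def]
      exact hKcone _ (Real.exp_pos _) _ (hσK _ _)
    have hu0K : ∀ s : ℝ, u0 s ∈ K := by
      intro s
      have h1 : u0 s = Real.exp (lam * s) • v (Set.projIcc 0 b hb s) := rfl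
      rw [h1]
      exact hKcone _ (Real.exp_pos _) _ (hvK _)
    have hu0fix : ∀ t ∈ Set.Icc (0:ℝ) b, u0 t = σ (R u0 t) (f t - S u0 t) := by
      intro t ht
      have h1 : ext v t = v ⟨t, ht⟩ := Set.IccExtend_of_mem hb v ht
      have h2 : v ⟨t, ht⟩ = Phi0 v t := (DFunLike.congr_fun hfix ⟨t, ht⟩).symm
      have h3 : u0 t = Real.exp (lam * t) • ext v t := rfl
      rw [h3, h1, h2, hPhi0def]
      rw [smul_smul, ← Real.exp_add]
      simp
      rfl
    have hsol0 : ∀ t ∈ Set.Icc (0:ℝ) b, u0 t ∈ K ∧ ∀ v' ∈ K,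
        ⟪f t - S u0 t, v' - u0 t⟫ ≤ ⟪A (u0 t), v' - u0 t⟫
          + j (R u0 t) v' - j (R u0 t) (u0 t) := by
      intro t ht
      refine ⟨hu0K t, ?_⟩
      intro v' hv'
      have := hσVI (R u0 t) (f t - S u0 t) v' hv'
      rw [← hu0fix t ht] at this
      exact this
    -- shift to make it constant on (-∞, 0]
    refine ⟨fun t => u0 (max t 0), hu0c.comp (continuous_id.max continuous_const), ?_, ?_, ?_⟩
    · intro t; exact hu0K _
    · intro t ht
      simp [max_eq_right ht]
    · intro t ht
      have heqon : Set.EqOn (fun t => u0 (max t 0)) u0 (Set.Icc 0 b) := by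
        intro s hs
        simp [max_eq_left hs.1]
      obtain ⟨hRe, hSe⟩ := htrans b hb hbI (fun t => u0 (max t 0)) u0
        (by exact hu0c.comp (continuous_id.max continuous_const)) hu0c heqon t ht
      rw [hRe, hSe, show (fun t => u0 (max t 0)) t = u0 t from heqon ht]
      exact hsol0 t ht
  -- conversion between the two formulations
  have hconv1 : ∀ (u : ℝ → X) (t : ℝ),
      (u t ∈ K ∧ ∀ v ∈ K, ⟪f t - S u t, v - u t⟫ ≤
        ⟪A (u t), v - u t⟫ + j (R u t) v - j (R u t) (u t)) ↔
      (u t ∈ K ∧ ∀ v ∈ K, j (R u t) v - j (R u t) (u t) ≥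
        ⟪f t - A (u t) - S u t, v - u t⟫) := by
    intro u t
    constructor
    · rintro ⟨h1, h2⟩
      refine ⟨h1, fun v hv => ?_⟩
      have := h2 v hv
      rw [hform (S u t) (f t) (u t) v]
      linarith
    · rintro ⟨h1, h2⟩
      refine ⟨h1, fun v hv => ?_⟩
      have := h2 v hv
      rw [hform (S u t) (f t) (u t) v] at this
      linarith
  rcases hI with ⟨T, hT, rfl⟩ | rfl
  · -- bounded interval case
    obtain ⟨u, huc, huK, huconst, husol⟩ := hex T hT.le Set.Subset.rfl
    refine ⟨u, ⟨huc, fun t ht => (hconv1 u t).mp (husol t ht)⟩, ?_⟩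
    rintro u' ⟨hu'c, hu'⟩ t ht
    have hu'sol := fun s hs => (hconv1 u' s).mpr (hu' s hs)
    exact huniq T hT.le Set.Subset.rfl u' u hu'c huc hu'sol husol ht
  · -- half line case
    have hsub : ∀ n : ℕ, Set.Icc (0:ℝ) n ⊆ Set.Ici 0 := fun n t ht => ht.1
    choose U hUc hUK hUconst hUsol using fun n : ℕ => hex n (Nat.cast_nonneg n) (hsub n)
    have compat : ∀ n m : ℕ, n ≤ m → Set.EqOn (U n) (U m) (Set.Icc 0 n) := by
      intro n m hnm
      apply huniq n (Nat.cast_nonneg n) (hsub n) (U n) (U m) (hUc n) (hUc m) (hUsol n)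
      intro t ht
      exact hUsol m t ⟨ht.1, le_trans ht.2 (Nat.cast_le.mpr hnm)⟩
    have compat' : ∀ (n m : ℕ) (t : ℝ), t ≤ n → t ≤ m → U n t = U m t := by
      intro n m t htn htm
      rcases le_total t 0 with h0 | h0
      · rw [hUconst n t h0, hUconst m t h0]
        rcases le_total n m with h | h
        · exact compat n m h ⟨le_refl 0, Nat.cast_nonneg n⟩
        · exact (compat m n h ⟨le_refl 0, Nat.cast_nonneg m⟩).symm
      · rcases le_total n m with h | h
        · exact compat n m h ⟨h0, htn⟩
        · exact (compat m n h ⟨h0, htm⟩).symm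
    set u : ℝ → X := fun t => U ⌈t⌉₊ t with hudef
    have hkey : ∀ (n : ℕ) (t : ℝ), t ≤ n → u t = U n t :=
      fun n t htn => compat' ⌈t⌉₊ n t (Nat.le_ceil t) htn
    have huc : Continuous u := by
      rw [continuous_iff_continuousAt]
      intro t₀
      have ht₀ : t₀ < ((⌈t₀⌉₊ + 1 : ℕ) : ℝ) := by
        push_cast
        have := Nat.le_ceil t₀
        linarith
      have hmem : Set.Iio (((⌈t₀⌉₊ + 1 : ℕ)) : ℝ) ∈ nhds t₀ := Iio_mem_nhds ht₀
      have heq : Set.EqOn u (U (⌈t₀⌉₊ + 1)) (Set.Iio (((⌈t₀⌉₊ + 1 : ℕ)) : ℝ)) :=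
        fun s hs => hkey _ s (le_of_lt hs)
      exact ((hUc (⌈t₀⌉₊ + 1)).continuousAt).congr (Filter.eventuallyEq_of_mem hmem heq).symm
    have husol : ∀ t ∈ Set.Ici (0:ℝ), u t ∈ K ∧ ∀ v ∈ K,
        ⟪f t - S u t, v - u t⟫ ≤ ⟪A (u t), v - u t⟫
          + j (R u t) v - j (R u t) (u t) := by
      intro t ht
      have heqon : Set.EqOn u (U ⌈t⌉₊) (Set.Icc 0 (⌈t⌉₊ : ℝ)) := fun s hs => hkey _ s hs.2
      obtain ⟨hRe, hSe⟩ := htrans (⌈t⌉₊ : ℝ) (Nat.cast_nonneg _) (hsub _) u (U ⌈t⌉₊)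
        huc (hUc _) heqon t ⟨ht, Nat.le_ceil t⟩
      have hs := hUsol ⌈t⌉₊ t ⟨ht, Nat.le_ceil t⟩
      rw [hRe, hSe, hkey ⌈t⌉₊ t (Nat.le_ceil t)]
      exact hs
    refine ⟨u, ⟨huc, fun t ht => (hconv1 u t).mp (husol t ht)⟩, ?_⟩
    rintro u' ⟨hu'c, hu'⟩ t ht
    have h1 : ∀ s ∈ Set.Icc (0:ℝ) t, u' s ∈ K ∧ ∀ v ∈ K,
        ⟪f s - S u' s, v - u' s⟫ ≤ ⟪A (u' s), v - u' s⟫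
          + j (R u' s) v - j (R u' s) (u' s) :=
      fun s hs => (hconv1 u' s).mpr (hu' s hs.1)
    have h2 : ∀ s ∈ Set.Icc (0:ℝ) t, u s ∈ K ∧ ∀ v ∈ K,
        ⟪f s - S u s, v - u s⟫ ≤ ⟪A (u s), v - u s⟫
          + j (R u s) v - j (R u s) (u s) :=
      fun s hs => husol s hs.1
    exact huniq t ht (fun s hs => hs.1) u' u hu'c huc h1 h2 ⟨ht, le_refl t⟩
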